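/- The coproduct Δ defined on generators of A_{r,s} by Δ(a) = a⊗a + b⊗c, Δ(b) = a⊗b + b⊗d, Δ(c) = c⊗a + d⊗c, Δ(d) = c⊗b + d⊗d, Δ(f) = f⊗f, Δ(f^{-1}) = f^{-1}⊗f^{-1} extends to a well-defined algebra homomorphism Δ : A_{r,s} → A_{r,s} ⊗ A_{r,s}; i.e., the defining relations of A_{r,s} are preserved by Δ. -/

import Mathlib

open scoped TensorProduct

noncomputable section

/-- Generators of the cross-product algebra `A_{r,s}`. -/
inductive Gen : Type
  | a | b | c | d | f | fi
deriving DecidableEq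

/-- The free algebra on the generators. -/
abbrev FA : Type := FreeAlgebra ℂ Gen

/-- The generators inside the free algebra. -/
def X (g : Gen) : FA := FreeAlgebra.ι ℂ g

/-- The defining relations of `A_{r,s}`. -/
inductive ArsRel (r s : ℂ) : FA → FA → Prop
  | ab : ArsRel r s (X .a * X .b) (r⁻¹ • (X .b * X .a))
  | bd : ArsRel r s (X .b * X .d) (r⁻¹ • (X .d * X .b))
  | ac : ArsRel r s (X .a * X .c) (r⁻¹ • (X .c * X .a))
  | cd : ArsRel r s (X .c * X .d) (r⁻¹ • (X .d * X .c))
  | bc : ArsRel r s (X .b * X .c) (X .c * X .b)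
  | ad : ArsRel r s (X .a * X .d - X .d * X .a) ((r⁻¹ - r) • (X .b * X .c))
  | af : ArsRel r s (X .a * X .f) (X .f * X .a)
  | cf : ArsRel r s (X .c * X .f) (s • (X .f * X .c))
  | bf : ArsRel r s (X .b * X .f) (s⁻¹ • (X .f * X .b))
  | df : ArsRel r s (X .d * X .f) (X .f * X .d)
  | ffi : ArsRel r s (X .f * X .fi) 1
  | fif : ArsRel r s (X .fi * X .f) 1

/-- The cross-product quantum algebra `A_{r,s}`. -/
abbrev Ars (r s : ℂ) : Type := RingQuot (ArsRel r s)

/-- The generators of `A_{r,s}`. -/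
def gen (r s : ℂ) (g : Gen) : Ars r s := RingQuot.mkAlgHom ℂ (ArsRel r s) (X g)

namespace Stmt3Aux

variable (r s : ℂ)

/-- Image of the generators under the coproduct. -/
def D : Gen → (Ars r s ⊗[ℂ] Ars r s)
  | .a => gen r s .a ⊗ₜ[ℂ] gen r s .a + gen r s .b ⊗ₜ[ℂ] gen r s .c
  | .b => gen r s .a ⊗ₜ[ℂ] gen r s .b + gen r s .b ⊗ₜ[ℂ] gen r s .d
  | .c => gen r s .c ⊗ₜ[ℂ] gen r s .a + gen r s .d ⊗ₜ[ℂ] gen r s .c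
  | .d => gen r s .c ⊗ₜ[ℂ] gen r s .b + gen r s .d ⊗ₜ[ℂ] gen r s .d
  | .f => gen r s .f ⊗ₜ[ℂ] gen r s .f
  | .fi => gen r s .fi ⊗ₜ[ℂ] gen r s .fi

/-- The coproduct on the free algebra. -/
def phi : FA →ₐ[ℂ] (Ars r s ⊗[ℂ] Ars r s) := FreeAlgebra.lift ℂ (D r s)

lemma grel {x y : FA} (h : ArsRel r s x y) :
    RingQuot.mkAlgHom ℂ (ArsRel r s) x = RingQuot.mkAlgHom ℂ (ArsRel r s) y :=
  RingQuot.mkAlgHom_rel ℂ h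

lemma hab : gen r s .a * gen r s .b = r⁻¹ • (gen r s .b * gen r s .a) := by
  simpa [gen] using grel r s ArsRel.ab

lemma hbd : gen r s .b * gen r s .d = r⁻¹ • (gen r s .d * gen r s .b) := by
  simpa [gen] using grel r s ArsRel.bd

lemma hac : gen r s .a * gen r s .c = r⁻¹ • (gen r s .c * gen r s .a) := by
  simpa [gen] using grel r s ArsRel.ac

lemma hcd : gen r s .c * gen r s .d = r⁻¹ • (gen r s .d * gen r s .c) := by
  simpa [gen] using grel r s ArsRel.cd

lemma hbc : gen r s .b * gen r s .c = gen r s .c * gen r s .b := by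
  simpa [gen] using grel r s ArsRel.bc

lemma had : gen r s .a * gen r s .d
    = gen r s .d * gen r s .a + (r⁻¹ - r) • (gen r s .c * gen r s .b) := by
  have h := grel r s ArsRel.ad
  simp only [map_sub, map_smul, map_mul] at h
  have h' : gen r s .a * gen r s .d - gen r s .d * gen r s .a
      = (r⁻¹ - r) • (gen r s .b * gen r s .c) := by simpa [gen] using h
  rw [hbc] at h'
  linear_combination (norm := module) h'

lemma haf : gen r s .a * gen r s .f = gen r s .f * gen r s .a := by
  simpa [gen] using grel r s ArsRel.af

lemma hcf : gen r s .c * gen r s .f = s • (gen r s .f * gen r s .c) := by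
  simpa [gen] using grel r s ArsRel.cf

lemma hbf : gen r s .b * gen r s .f = s⁻¹ • (gen r s .f * gen r s .b) := by
  simpa [gen] using grel r s ArsRel.bf

lemma hdf : gen r s .d * gen r s .f = gen r s .f * gen r s .d := by
  simpa [gen] using grel r s ArsRel.df

lemma hffi : gen r s .f * gen r s .fi = 1 := by
  simpa [gen] using grel r s ArsRel.ffi

lemma hfif : gen r s .fi * gen r s .f = 1 := by
  simpa [gen] using grel r s ArsRel.fif

lemma phi_rel (hr : r ≠ 0) (hs : s ≠ 0) {x y : FA} (h : ArsRel r s x y) :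
    phi r s x = phi r s y := by
  induction h <;>
  · simp only [phi, map_mul, map_sub, map_smul, map_one, X, FreeAlgebra.lift_ι_apply, D,
      add_mul, mul_add, Algebra.TensorProduct.tmul_mul_tmul,
      hab, hbd, hac, hcd, hbc, had, haf, hcf, hbf, hdf, hffi, hfif,
      Algebra.TensorProduct.one_def, ← TensorProduct.smul_tmul', TensorProduct.tmul_smul, TensorProduct.tmul_add, TensorProduct.add_tmul,
      smul_add, smul_smul]
    try (match_scalars <;> (field_simp; try ring))
    all_goals (rw [sub_eq_iff_eq_add]; match_scalars <;> (field_simp; try ring))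

end Stmt3Aux

/-- The matrix coproduct `Δ(T) = T ⊗̇ T`, `Δ(f) = f ⊗ f` extends to a well-defined
algebra homomorphism `Δ : A_{r,s} → A_{r,s} ⊗ A_{r,s}`. -/
theorem stmt3 (r s : ℂ) (hr : r ≠ 0) (hs : s ≠ 0) :
    ∃ Δ : Ars r s →ₐ[ℂ] (Ars r s ⊗[ℂ] Ars r s),
      Δ (gen r s .a) = gen r s .a ⊗ₜ[ℂ] gen r s .a + gen r s .b ⊗ₜ[ℂ] gen r s .c ∧
      Δ (gen r s .b) = gen r s .a ⊗ₜ[ℂ] gen r s .b + gen r s .b ⊗ₜ[ℂ] gen r s .d ∧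
      Δ (gen r s .c) = gen r s .c ⊗ₜ[ℂ] gen r s .a + gen r s .d ⊗ₜ[ℂ] gen r s .c ∧
      Δ (gen r s .d) = gen r s .c ⊗ₜ[ℂ] gen r s .b + gen r s .d ⊗ₜ[ℂ] gen r s .d ∧
      Δ (gen r s .f) = gen r s .f ⊗ₜ[ℂ] gen r s .f ∧
      Δ (gen r s .fi) = gen r s .fi ⊗ₜ[ℂ] gen r s .fi := by
  refine ⟨RingQuot.liftAlgHom ℂ ⟨Stmt3Aux.phi r s, fun x y h => Stmt3Aux.phi_rel r s hr hs h⟩,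
    ?_, ?_, ?_, ?_, ?_, ?_⟩ <;>
  · simp [gen, RingQuot.liftAlgHom_mkAlgHom_apply, Stmt3Aux.phi, X, FreeAlgebra.lift_ι_apply,
      Stmt3Aux.D]
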